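/- Let n ≥ 1, N = 2^n, and let u : Fin N → ℂ satisfy ‖u j‖ = 1 for all j. Define for 1 ≤ j ≤ N/2 − 1 the character value χ_j(u) = u(2j−2) · (u(2j−1))⁻¹ · (u(2j))⁻¹ · u(2j+1). Then χ_j(u) = 1 for all 1 ≤ j ≤ N/2 − 1 if and only if there exist v : Fin 2^(n−1) → ℂ and w : Fin 2 → ℂ such that u j = v(⌊j/2⌋) · w(j mod 2) for all j ∈ Fin N. -/

import Mathlib

set_option maxHeartbeats 1000000


/-- For `n ≥ 1` and `j < 2^n`, the quotient `j / 2` is a valid `(n-1)`-qubit index. -/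
lemma div2_lt {n : ℕ} (hn : 1 ≤ n) (j : Fin (2^n)) : (j : ℕ) / 2 < 2^(n-1) := by
  have h : (2:ℕ)^n = 2^(n-1) * 2 := by
    conv_lhs => rw [show n = (n-1) + 1 by omega]
    rw [pow_succ]
  have hj := j.isLt
  omega

/-- Extension of a vector indexed by `Fin N` to all of `ℕ` (by `1` out of range);
in the statements below it is only ever evaluated in range. -/
noncomputable def extend {N : ℕ} (d : Fin N → ℂ) (m : ℕ) : ℂ :=
  if h : m < N then d ⟨m, h⟩ else 1

/-- The character `χ_j(d) = d(2j-2) · d(2j-1)⁻¹ · d(2j)⁻¹ · d(2j+1)`. -/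
noncomputable def chiFn {N : ℕ} (d : Fin N → ℂ) (j : ℕ) : ℂ :=
  extend d (2*j - 2) * (extend d (2*j - 1))⁻¹ * (extend d (2*j))⁻¹ * extend d (2*j + 1)

lemma extend_eq {N : ℕ} (d : Fin N → ℂ) {m : ℕ} (h : m < N) :
    extend d m = d ⟨m, h⟩ := dif_pos h

/-- all characters `χ_j(u)`, `1 ≤ j ≤ 2^(n-1) - 1`, equal `1` iff the
diagonal unitary `u` factors as a tensor on the last qubit. -/
theorem chi_eq_one_iff_tensor (n : ℕ) (hn : 1 ≤ n)
    (u : Fin (2^n) → ℂ) (hu : ∀ j, ‖u j‖ = 1) :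
    (∀ j : ℕ, 1 ≤ j → j ≤ 2^(n-1) - 1 → chiFn u j = 1) ↔
      (∃ (v : Fin (2^(n-1)) → ℂ) (w : Fin 2 → ℂ),
        ∀ j : Fin (2^n),
          u j = v ⟨(j : ℕ) / 2, div2_lt hn j⟩ *
            w ⟨(j : ℕ) % 2, Nat.mod_lt _ (by norm_num)⟩) := by
  have hP : (2:ℕ)^n = 2^(n-1) * 2 := by
    conv_lhs => rw [show n = (n-1) + 1 by omega]
    rw [pow_succ]
  have hpos : 0 < 2^(n-1) := Nat.pow_pos (by norm_num)
  have hne : ∀ j, u j ≠ 0 := by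
    intro j h
    have := hu j
    rw [h] at this
    simp at this
  have hEne : ∀ m, extend u m ≠ 0 := by
    intro m
    unfold extend
    split
    · exact hne _
    · exact one_ne_zero
  constructor
  · intro H
    -- the ratio extend u (2k+1) / extend u (2k) is constant
    have key : ∀ k, k < 2^(n-1) →
        extend u (2*k+1) = extend u (2*k) * (extend u 1 * (extend u 0)⁻¹) := by
      intro k
      induction k with
      | zero =>
        intro _
        have h0 : extend u 0 ≠ 0 := hEne 0
        field_simp
      | succ k ih =>
        intro hk
        have hk' : k < 2^(n-1) := by omega
        have hchi := H (k+1) (by omega) (by omega)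
        unfold chiFn at hchi
        rw [show 2*(k+1) - 2 = 2*k from by omega, show 2*(k+1) - 1 = 2*k+1 from by omega,
          show 2*(k+1) = 2*k+2 from by omega] at hchi
        have ihk := ih hk'
        rw [show 2*(k+1)+1 = 2*k+3 from by omega, show 2*(k+1) = 2*k+2 from by omega]
        have h0 := hEne (2*k)
        have h1 := hEne (2*k+1)
        have h2 := hEne (2*k+2)
        have h3 := hEne (2*k+3)
        have e0 := hEne 0
        have e1 := hEne 1
        rw [ihk, show 2*k+2+1 = 2*k+3 from by omega] at hchi
        field_simp at hchi
        have hc : extend u (2*k) * (extend u 0 * extend u (2*k+3))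
            = extend u (2*k) * (extend u 1 * extend u (2*k+2)) := by
          linear_combination extend u (2*k) * hchi
        have hc2 := mul_left_cancel₀ h0 hc
        field_simp
        linear_combination hc2
    refine ⟨fun k => extend u (2*(k:ℕ)), ![1, extend u 1 * (extend u 0)⁻¹], ?_⟩
    intro j
    have hj := j.isLt
    rcases Nat.mod_two_eq_zero_or_one (j:ℕ) with hm | hm
    · have hdiv : 2 * ((j:ℕ)/2) = (j:ℕ) := by omega
      have hfin : (⟨(j:ℕ) % 2, Nat.mod_lt _ (by norm_num)⟩ : Fin 2) = 0 := by
        ext; simp [hm]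
      rw [hfin]
      simp only [Matrix.cons_val_zero, mul_one]
      rw [hdiv, extend_eq u hj]
    · have hdiv : 2 * ((j:ℕ)/2) + 1 = (j:ℕ) := by omega
      have hfin : (⟨(j:ℕ) % 2, Nat.mod_lt _ (by norm_num)⟩ : Fin 2) = 1 := by
        ext; simp [hm]
      rw [hfin]
      simp only [Matrix.cons_val_one, Matrix.head_cons]
      have := key ((j:ℕ)/2) (div2_lt hn j)
      rw [hdiv, extend_eq u hj] at this
      exact this
  · rintro ⟨v, w, hvw⟩ j hj1 hj2
    -- all values of u are v ⟨m/2⟩ * w ⟨m%2⟩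
    have hval : ∀ (m : ℕ) (h : m < 2^n) (a : Fin (2^(n-1))) (b : Fin 2),
        m / 2 = (a:ℕ) → m % 2 = (b:ℕ) → extend u m = v a * w b := by
      intro m h a b ha hb
      rw [extend_eq u h, hvw ⟨m, h⟩]
      congr 1
      · congr 1
        ext
        exact ha
      · congr 1
        ext
        exact hb
    have hvne : ∀ k : Fin (2^(n-1)), v k ≠ 0 := by
      intro k
      have h2k : 2 * (k:ℕ) < 2^n := by have := k.isLt; omega
      have h := hne ⟨2*(k:ℕ), h2k⟩
      rw [hvw ⟨2*(k:ℕ), h2k⟩] at h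
      have hv := (mul_ne_zero_iff.mp h).1
      have hfin : (⟨2*(k:ℕ)/2, div2_lt hn ⟨2*(k:ℕ), h2k⟩⟩ : Fin (2^(n-1))) = k := by
        ext; exact Nat.mul_div_cancel_left _ (by norm_num)
      rwa [hfin] at hv
    have hwne : ∀ i : Fin 2, w i ≠ 0 := by
      intro i
      have hi : (i:ℕ) < 2^n := by have := i.isLt; omega
      have h := hne ⟨(i:ℕ), hi⟩
      rw [hvw ⟨(i:ℕ), hi⟩] at h
      have hw := (mul_ne_zero_iff.mp h).2
      have hfin : (⟨(i:ℕ) % 2, Nat.mod_lt _ (by norm_num)⟩ : Fin 2) = i := by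
        ext; simp [Nat.mod_eq_of_lt i.isLt]
      rwa [hfin] at hw
    have hb1 : 2*j - 2 < 2^n := by omega
    have hb2 : 2*j - 1 < 2^n := by omega
    have hb3 : 2*j < 2^n := by omega
    have hb4 : 2*j + 1 < 2^n := by omega
    have hj1' : j - 1 < 2^(n-1) := by omega
    have hj' : j < 2^(n-1) := by omega
    unfold chiFn
    rw [hval _ hb1 ⟨j-1, hj1'⟩ 0 (by simp only [Fin.val_mk]; omega) (by omega),
        hval _ hb2 ⟨j-1, hj1'⟩ 1 (by simp only [Fin.val_mk]; omega) (by omega),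
        hval _ hb3 ⟨j, hj'⟩ 0 (by simp only [Fin.val_mk]; omega) (by omega),
        hval _ hb4 ⟨j, hj'⟩ 1 (by simp only [Fin.val_mk]; omega) (by omega)]
    have hv1 := hvne ⟨j-1, by omega⟩
    have hv2 := hvne ⟨j, by omega⟩
    have hw0 := hwne 0
    have hw1 := hwne 1
    rw [mul_inv, mul_inv]
    field_simp
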